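/- Let T be a directed spanning tree on vertex set {1,...,m} rooted at vertex q with all arcs oriented away from q, and let ρ_i denote the unique parent of each vertex i ≠ q. Choose real numbers v_1,...,v_m with v_q = 0 and the v_i pairwise distinct and nonzero for i ≠ q. Define the m×m matrix G by g_ii = v_i, g_{i,ρ_i} = -v_i for i ≠ q, and g_ij = 0 otherwise. Then for every complex number s and every vector x ∈ ℂ^m satisfying Gᵀx = s x and x_q = 0, we have x = 0; consequently (G, e_q) is a controllable pair. -/

import Mathlib

open Matrix

/-- The controllability matrix `[b, Gb, ..., G^(m-1) b]`. -/
noncomputable def ctrbVec {m : ℕ} (G : Matrix (Fin m) (Fin m) ℝ) (b : Fin m → ℝ) :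
    Matrix (Fin m) (Fin m) ℝ :=
  fun i k => (G ^ (k : ℕ) *ᵥ b) i

lemma aux_dot_sum_mulVec {m : ℕ} (y b : Fin m → ℝ) (t : Finset ℕ)
    (M : ℕ → Matrix (Fin m) (Fin m) ℝ) :
    y ⬝ᵥ ((∑ i ∈ t, M i) *ᵥ b) = ∑ i ∈ t, y ⬝ᵥ (M i *ᵥ b) := by
  induction t using Finset.induction_on with
  | empty => simp [Matrix.zero_mulVec]
  | @insert a s h ih =>
      rw [Finset.sum_insert h, Finset.sum_insert h, Matrix.add_mulVec,
        dotProduct_add, ih]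

lemma aux_dot_map {m : ℕ} (u w : Fin m → ℝ) (M : Matrix (Fin m) (Fin m) ℝ) :
    (fun i => (u i : ℂ)) ⬝ᵥ ((M.map Complex.ofReal) *ᵥ fun j => (w j : ℂ))
      = ((u ⬝ᵥ (M *ᵥ w) : ℝ) : ℂ) := by
  simp only [dotProduct, Matrix.mulVec, Matrix.map_apply]
  push_cast
  ring_nf

theorem stmt3 {m : ℕ} (q : Fin m) (ρ : Fin m → Fin m)
    (htree : ∀ i, ∃ k, ρ^[k] i = q)
    (v : Fin m → ℝ) (hvq : v q = 0) (hinj : Function.Injective v)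
    (hvnz : ∀ i, i ≠ q → v i ≠ 0)
    (G : Matrix (Fin m) (Fin m) ℝ)
    (hG : ∀ i j, G i j =
      if i = j then v i else if i ≠ q ∧ j = ρ i then -v i else 0) :
    (∀ (s : ℂ) (x : Fin m → ℂ),
        (G.map Complex.ofReal)ᵀ *ᵥ x = s • x → x q = 0 → x = 0) ∧
      (ctrbVec G (fun i => if i = q then 1 else 0)).rank = m := by
  classical
  -- no fixed point except the root
  have hfix : ∀ i, ρ i = i → i = q := by
    intro i h
    obtain ⟨k, hk⟩ := htree i
    rwa [Function.iterate_fixed h k] at hk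
  -- depth function
  set d : Fin m → ℕ := fun i => Nat.find (htree i) with hd_def
  have hdspec : ∀ i, ρ^[d i] i = q := fun i => Nat.find_spec (htree i)
  have hdmin : ∀ i k, ρ^[k] i = q → d i ≤ k := fun i k h => Nat.find_min' (htree i) h
  have hdq : d q = 0 := Nat.le_zero.mp (hdmin q 0 rfl)
  have hd0 : ∀ i, d i = 0 → i = q := by
    intro i h
    have h2 := hdspec i
    rwa [h, Function.iterate_zero_apply] at h2
  have hdρ : ∀ i, i ≠ q → d i = d (ρ i) + 1 := by
    intro i hiq
    have h1 : d i ≠ 0 := fun h => hiq (hd0 i h)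
    have h2 : d (ρ i) ≤ d i - 1 := by
      apply hdmin
      have h3 := hdspec i
      rw [← Nat.succ_pred_eq_of_pos (Nat.pos_of_ne_zero h1),
        Function.iterate_succ_apply] at h3
      exact h3
    have h3 : d i ≤ d (ρ i) + 1 := by
      apply hdmin
      rw [Function.iterate_succ_apply]
      exact hdspec (ρ i)
    omega
  have part1 : ∀ (s : ℂ) (x : Fin m → ℂ),
      (G.map Complex.ofReal)ᵀ *ᵥ x = s • x → x q = 0 → x = 0 := by
    intro s x hx hxq
    have hE : ∀ j, (v j : ℂ) * x j -
        (∑ i, if i ≠ q ∧ j = ρ i then (v i : ℂ) * x i else 0) = s * x j := by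
      intro j
      have h1 : ((G.map Complex.ofReal)ᵀ *ᵥ x) j = s * x j := by rw [hx]; rfl
      rw [Matrix.mulVec, dotProduct] at h1
      have h2 : ∀ i ∈ Finset.univ, (G.map Complex.ofReal)ᵀ j i * x i
          = (if i = j then (v i : ℂ) * x i else 0)
            + (if i ≠ q ∧ j = ρ i then -(v i : ℂ) * x i else 0) := by
        intro i _
        simp only [Matrix.transpose_apply, Matrix.map_apply, hG i j]
        by_cases hij : i = j
        · subst hij
          have hc : ¬ (i ≠ q ∧ i = ρ i) := by
            rintro ⟨hc1, hc2⟩; exact hc1 (hfix i hc2.symm)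
          rw [if_pos rfl, if_pos rfl, if_neg hc, add_zero]
        · rw [if_neg hij, if_neg hij, zero_add]
          by_cases hc : i ≠ q ∧ j = ρ i
          · rw [if_pos hc, if_pos hc]; push_cast; ring
          · rw [if_neg hc, if_neg hc, Complex.ofReal_zero, zero_mul]
      rw [Finset.sum_congr rfl h2, Finset.sum_add_distrib] at h1
      rw [Finset.sum_ite_eq' Finset.univ j (fun i => (v i : ℂ) * x i)] at h1
      simp only [Finset.mem_univ, if_true] at h1
      have h3 : ∑ i, (if i ≠ q ∧ j = ρ i then -(v i : ℂ) * x i else 0)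
          = -∑ i, (if i ≠ q ∧ j = ρ i then (v i : ℂ) * x i else 0) := by
        rw [← Finset.sum_neg_distrib]
        apply Finset.sum_congr rfl
        intro i _
        split <;> simp
      rw [h3] at h1
      linear_combination h1
    by_contra hxne
    obtain ⟨i1, hi1⟩ := Function.ne_iff.mp hxne
    simp only [Pi.zero_apply] at hi1
    have hSne : (Finset.univ.filter (fun i => x i ≠ 0)).Nonempty :=
      ⟨i1, by simp [hi1]⟩
    obtain ⟨i0, hi0S, hi0max⟩ :=
      (Finset.univ.filter (fun i => x i ≠ 0)).exists_max_image d hSne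
    have hi0 : x i0 ≠ 0 := by simpa using hi0S
    have hmax : ∀ i, x i ≠ 0 → d i ≤ d i0 := fun i hi => hi0max i (by simp [hi])
    have hi0q : i0 ≠ q := fun h => hi0 (h ▸ hxq)
    have hW0 : ∀ j, (∀ i, i ≠ q → ρ i = j → x i = 0) →
        (∑ i, if i ≠ q ∧ j = ρ i then (v i : ℂ) * x i else 0) = 0 := by
      intro j hch
      apply Finset.sum_eq_zero
      intro i _
      split
      · next h => rw [hch i h.1 h.2.symm, mul_zero]
      · rfl
    have hleaf : ∀ j, x j ≠ 0 → (∀ i, i ≠ q → ρ i = j → x i = 0) →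
        (v j : ℂ) = s := by
      intro j hj hch
      have h := hE j
      rw [hW0 j hch, sub_zero] at h
      exact mul_right_cancel₀ hj h
    have hs : (v i0 : ℂ) = s := by
      apply hleaf i0 hi0
      intro i hiq hri
      by_contra hxi
      have hle : d i ≤ d i0 := hmax i hxi
      have := hdρ i hiq
      rw [hri] at this
      omega
    have hvs : ∀ j, (v j : ℂ) = s → j = i0 := by
      intro j hj
      apply hinj
      exact_mod_cast hj.trans hs.symm
    have hB : ∀ r j, x j ≠ 0 → d j + r = d i0 → j = ρ^[r] i0 := by
      intro r
      induction r using Nat.strong_induction_on with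
      | _ r ih =>
        intro j hj hdj
        by_cases hch : ∀ i, i ≠ q → ρ i = j → x i = 0
        · have hji := hvs j (hleaf j hj hch)
          subst hji
          have hr0 : r = 0 := by omega
          simp [hr0]
        · push_neg at hch
          obtain ⟨i, hiq, hri, hxi⟩ := hch
          have hdi : d i = d j + 1 := by rw [hdρ i hiq, hri]
          have hle : d i ≤ d i0 := hmax i hxi
          have hr : r ≠ 0 := by omega
          obtain ⟨r', rfl⟩ := Nat.exists_eq_succ_of_ne_zero hr
          have hi' := ih r' (Nat.lt_succ_self r') i hxi (by omega)
          rw [Function.iterate_succ_apply', ← hi']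
          exact hri.symm
    have hC : ∀ n j, d j = n → x j = 0 := by
      intro n
      induction n using Nat.strong_induction_on with
      | _ n ih =>
        intro j hdj
        rcases Nat.eq_zero_or_pos n with h0 | hpos
        · subst h0; rw [hd0 j hdj]; exact hxq
        · by_contra hxj
          have hjq : j ≠ q := by
            intro h; subst h; rw [hdq] at hdj; omega
          have hle : d j ≤ d i0 := hmax j hxj
          have hBj := hB (d i0 - d j) j hxj (by omega)
          have hdp : d (ρ j) = n - 1 := by
            have := hdρ j hjq; omega
          have hxp : x (ρ j) = 0 := ih (n - 1) (by omega) (ρ j) hdp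
          have hWp : (∑ i, if i ≠ q ∧ ρ j = ρ i then (v i : ℂ) * x i else 0)
              = (v j : ℂ) * x j := by
            rw [Finset.sum_eq_single j]
            · simp [hjq]
            · intro i _ hij
              split
              · next h =>
                by_contra hne
                have hxi : x i ≠ 0 := by
                  intro hxi0; rw [hxi0, mul_zero] at hne; exact hne rfl
                have hdi : d i = n := by
                  have h4 := hdρ i h.1
                  rw [← h.2] at h4
                  omega
                have hBi := hB (d i0 - d i) i hxi
                  (by have := hmax i hxi; omega)
                rw [hdi] at hBi
                rw [hdj] at hBj
                exact hij (hBi.trans hBj.symm)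
              · rfl
            · intro h; simp at h
          have hEp := hE (ρ j)
          rw [hxp, hWp, mul_zero, mul_zero, zero_sub, neg_eq_zero] at hEp
          have hvj : (v j : ℂ) ≠ 0 := by exact_mod_cast hvnz j hjq
          exact hxj ((mul_eq_zero.mp hEp).resolve_left hvj)
    exact absurd (funext fun j => hC (d j) j rfl) hxne
  refine ⟨part1, ?_⟩
  set b : Fin m → ℝ := fun i => if i = q then 1 else 0 with hb
  have hdet : (ctrbVec G b).det ≠ 0 := by
    intro hdet
    obtain ⟨y, hy0, hy⟩ := Matrix.exists_vecMul_eq_zero_iff.mpr hdet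
    have hyk : ∀ k : Fin m, y ⬝ᵥ (G ^ (k : ℕ) *ᵥ b) = 0 := fun k => congrFun hy k
    have hpoly : ∀ p : Polynomial ℝ, p.natDegree < m ∨ p = 0 →
        y ⬝ᵥ ((Polynomial.aeval G) p *ᵥ b) = 0 := by
      rintro p (hp | rfl)
      · rw [Polynomial.aeval_eq_sum_range' hp, aux_dot_sum_mulVec]
        apply Finset.sum_eq_zero
        intro i hi
        rw [Matrix.smul_mulVec, dotProduct_smul]
        have hi' : i < m := Finset.mem_range.mp hi
        have := hyk ⟨i, hi'⟩
        simp only [Fin.val_mk] at this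
        rw [this, smul_zero]
      · simp [Matrix.zero_mulVec]
    have hall : ∀ k : ℕ, y ⬝ᵥ (G ^ k *ᵥ b) = 0 := by
      intro k
      rcases Nat.eq_zero_or_pos m with hm0 | hm
      · subst hm0; simp [dotProduct]
      · rw [Matrix.pow_eq_aeval_mod_charpoly G k]
        apply hpoly
        rcases eq_or_ne ((Polynomial.X : Polynomial ℝ) ^ k %ₘ G.charpoly) 0 with h0 | h0
        · exact Or.inr h0
        · left
          have hlt := Polynomial.degree_modByMonic_lt
            ((Polynomial.X : Polynomial ℝ) ^ k) (Matrix.charpoly_monic G)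
          rw [Matrix.charpoly_degree_eq_dim, Fintype.card_fin,
            Polynomial.degree_eq_natDegree h0] at hlt
          exact_mod_cast hlt
    -- complexify
    set GC : Matrix (Fin m) (Fin m) ℂ := G.map Complex.ofReal with hGC
    set bC : Fin m → ℂ := fun i => if i = q then 1 else 0 with hbC
    have hbCb : bC = fun j => ((b j : ℝ) : ℂ) := by
      funext j
      simp only [hbC, hb]
      by_cases h : j = q <;> simp [h]
    have hGCpow : ∀ k : ℕ, GC ^ k = (G ^ k).map Complex.ofReal := by
      intro k
      exact (map_pow (Complex.ofRealHom.mapMatrix) G k).symm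
    have hallC : ∀ k : ℕ, (fun i => (y i : ℂ)) ⬝ᵥ (GC ^ k *ᵥ bC) = 0 := by
      intro k
      rw [hGCpow k, hbCb, aux_dot_map, hall k, Complex.ofReal_zero]
    set U : Submodule ℂ (Fin m → ℂ) :=
      { carrier := {z | ∀ k : ℕ, z ⬝ᵥ (GC ^ k *ᵥ bC) = 0}
        add_mem' := by
          intro a c ha hc k
          rw [add_dotProduct, ha k, hc k, add_zero]
        zero_mem' := by intro k; rw [zero_dotProduct]
        smul_mem' := by
          intro c a ha k
          rw [smul_dotProduct, ha k, smul_zero] } with hU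
    have hUinv : ∀ z ∈ U, GCᵀ.mulVecLin z ∈ U := by
      intro z hz k
      rw [Matrix.mulVecLin_apply, Matrix.mulVec_transpose,
        ← Matrix.dotProduct_mulVec, Matrix.mulVec_mulVec, ← pow_succ']
      exact hz (k + 1)
    let f : U →ₗ[ℂ] U := (GCᵀ.mulVecLin).restrict hUinv
    have hyCU : (fun i => (y i : ℂ)) ∈ U := fun k => hallC k
    have hyCne : (fun i => (y i : ℂ)) ≠ (0 : Fin m → ℂ) := by
      obtain ⟨i, hi⟩ := Function.ne_iff.mp hy0
      simp only [Pi.zero_apply] at hi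
      intro h
      have h2 := congrFun h i
      simp only [Pi.zero_apply, Complex.ofReal_eq_zero] at h2
      exact hi h2
    have : Nontrivial U := by
      refine nontrivial_of_ne ⟨_, hyCU⟩ 0 ?_
      intro h
      exact hyCne (congrArg Subtype.val h)
    obtain ⟨μ, hμ⟩ := Module.End.exists_eigenvalue f
    obtain ⟨z, hz⟩ := hμ.exists_hasEigenvector
    have hfz : GCᵀ *ᵥ (z : Fin m → ℂ) = μ • (z : Fin m → ℂ) := by
      have h1 := hz.apply_eq_smul
      have h2 := congrArg (Subtype.val) h1
      rw [Matrix.mulVec_transpose]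
      simpa [f, LinearMap.restrict_apply] using h2
    have hzq : (z : Fin m → ℂ) q = 0 := by
      have h1 := z.2 0
      rw [pow_zero, Matrix.one_mulVec] at h1
      simpa [dotProduct, hbC, mul_ite, Finset.sum_ite_eq'] using h1
    have hz0 := part1 μ (z : Fin m → ℂ) hfz hzq
    exact hz.2 (Subtype.ext hz0)
  have hunit : IsUnit (ctrbVec G b) :=
    (Matrix.isUnit_iff_isUnit_det _).mpr (isUnit_iff_ne_zero.mpr hdet)
  rw [Matrix.rank_of_isUnit _ hunit, Fintype.card_fin]
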